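/- Let L > 0 and β > 0. Let u : [0,L]² → ℝ be of class C² and satisfy u(L,y) = 0 for all y ∈ [0,L], and u_y(x,0) = 0 and u_y(x,L) = β u_x(x,L) for all x ∈ [0,L]. Then ∫_Ω x · u(x,y) · (∂ₓ⁻¹ u_yy)(x,y) dx dy = β ∫₀^L x · u(x,L)² dx + ½ ∫_Ω ((∂ₓ⁻¹ u_y)(x,y))² dx dy. -/

import Mathlib

open MeasureTheory Real

noncomputable section

/-- Partial derivative in `x` of `u(x,y)`. -/
def pdx (u : ℝ → ℝ → ℝ) (x y : ℝ) : ℝ := deriv (fun x' => u x' y) x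

/-- Third partial derivative in `x` of `u(x,y)`. -/
def pdx3 (u : ℝ → ℝ → ℝ) (x y : ℝ) : ℝ := iteratedDeriv 3 (fun x' => u x' y) x

/-- Partial derivative in `y` of `u(x,y)`. -/
def pdy (u : ℝ → ℝ → ℝ) (x y : ℝ) : ℝ := deriv (fun y' => u x y') y

/-- Second partial derivative in `y` of `u(x,y)`. -/
def pdy2 (u : ℝ → ℝ → ℝ) (x y : ℝ) : ℝ := iteratedDeriv 2 (fun y' => u x y') y

/-- The nonlocal operator `(∂ₓ⁻¹ w)(x,y) = -∫ₓ^L w(s,y) ds`. -/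
def pxInv (L : ℝ) (w : ℝ → ℝ → ℝ) (x y : ℝ) : ℝ := -(∫ s in x..L, w s y)

/-- The adjoint nonlocal operator `((∂ₓ⁻¹)* w)(x,y) = ∫₀^x w(s,y) ds`. -/
def pxInvStar (w : ℝ → ℝ → ℝ) (x y : ℝ) : ℝ := ∫ s in (0:ℝ)..x, w s y

/- ### Auxiliary lemmas -/

lemma sliceY {F : ℝ × ℝ → ℝ} (hF : Differentiable ℝ F) (x y : ℝ) :
    HasDerivAt (fun y' => F (x, y')) (fderiv ℝ F (x, y) (0, 1)) y := by
  have h : HasDerivAt (fun y' : ℝ => ((x, y') : ℝ × ℝ)) ((0 : ℝ), (1 : ℝ)) y :=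
    (hasDerivAt_const y x).prodMk (hasDerivAt_id y)
  exact (hF (x, y)).hasFDerivAt.comp_hasDerivAt y h

lemma sliceX {F : ℝ × ℝ → ℝ} (hF : Differentiable ℝ F) (x y : ℝ) :
    HasDerivAt (fun x' => F (x', y)) (fderiv ℝ F (x, y) (1, 0)) x := by
  have h : HasDerivAt (fun x' : ℝ => ((x', y) : ℝ × ℝ)) ((1 : ℝ), (0 : ℝ)) x :=
    (hasDerivAt_id x).prodMk (hasDerivAt_const x y)
  exact (hF (x, y)).hasFDerivAt.comp_hasDerivAt x h

lemma contSliceY {F : ℝ × ℝ → ℝ} (hF : Continuous F) (x : ℝ) :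
    Continuous fun y => F (x, y) :=
  hF.comp (continuous_const.prodMk continuous_id)

lemma contSliceX {F : ℝ × ℝ → ℝ} (hF : Continuous F) (y : ℝ) :
    Continuous fun x => F (x, y) :=
  hF.comp (continuous_id.prodMk continuous_const)

lemma fubini_le {f : ℝ → ℝ → ℝ} (hf : Continuous fun p : ℝ × ℝ => f p.1 p.2)
    {a b c d : ℝ} (hab : a ≤ b) (hcd : c ≤ d) :
    ∫ x in a..b, ∫ y in c..d, f x y = ∫ y in c..d, ∫ x in a..b, f x y := by
  rw [intervalIntegral.integral_of_le hab, intervalIntegral.integral_of_le hcd]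
  simp_rw [intervalIntegral.integral_of_le hcd, intervalIntegral.integral_of_le hab]
  apply MeasureTheory.integral_integral_swap
  rw [Measure.prod_restrict]
  have h1 : IntegrableOn (Function.uncurry f) (Set.Icc a b ×ˢ Set.Icc c d)
      ((volume : Measure ℝ).prod volume) :=
    hf.continuousOn.integrableOn_compact (isCompact_Icc.prod isCompact_Icc)
  exact h1.mono_set (Set.prod_mono Set.Ioc_subset_Icc_self Set.Ioc_subset_Icc_self)

lemma fubini_cont {f : ℝ → ℝ → ℝ} (hf : Continuous fun p : ℝ × ℝ => f p.1 p.2)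
    (a b c d : ℝ) :
    ∫ x in a..b, ∫ y in c..d, f x y = ∫ y in c..d, ∫ x in a..b, f x y := by
  rcases le_total a b with hab | hab <;> rcases le_total c d with hcd | hcd
  · exact fubini_le hf hab hcd
  · have h := fubini_le hf hab hcd
    calc ∫ x in a..b, ∫ y in c..d, f x y
        = ∫ x in a..b, -∫ y in d..c, f x y := by
          simp_rw [intervalIntegral.integral_symm d c]
      _ = -∫ x in a..b, ∫ y in d..c, f x y := intervalIntegral.integral_neg
      _ = -∫ y in d..c, ∫ x in a..b, f x y := by rw [h]
      _ = ∫ y in c..d, ∫ x in a..b, f x y := (intervalIntegral.integral_symm d c).symm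
  · have h := fubini_le hf hab hcd
    calc ∫ x in a..b, ∫ y in c..d, f x y
        = -∫ x in b..a, ∫ y in c..d, f x y := intervalIntegral.integral_symm b a
      _ = -∫ y in c..d, ∫ x in b..a, f x y := by rw [h]
      _ = ∫ y in c..d, -∫ x in b..a, f x y := intervalIntegral.integral_neg.symm
      _ = ∫ y in c..d, ∫ x in a..b, f x y := by
          simp_rw [intervalIntegral.integral_symm b a]
  · have h := fubini_le hf hab hcd
    calc ∫ x in a..b, ∫ y in c..d, f x y
        = -∫ x in b..a, ∫ y in c..d, f x y := intervalIntegral.integral_symm b a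
      _ = -∫ x in b..a, -∫ y in d..c, f x y := by
          simp_rw [intervalIntegral.integral_symm d c]
      _ = ∫ x in b..a, ∫ y in d..c, f x y := by rw [intervalIntegral.integral_neg]; ring_nf
      _ = ∫ y in d..c, ∫ x in b..a, f x y := h
      _ = ∫ y in d..c, -∫ x in a..b, f x y := by
          simp_rw [intervalIntegral.integral_symm a b]
      _ = -∫ y in d..c, ∫ x in a..b, f x y := intervalIntegral.integral_neg
      _ = ∫ y in c..d, ∫ x in a..b, f x y := by
          rw [intervalIntegral.integral_symm c d, neg_neg]

variable {u : ℝ → ℝ → ℝ}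

lemma hasDerivAt_pdy (hu : Differentiable ℝ fun p : ℝ × ℝ => u p.1 p.2) (x y : ℝ) :
    HasDerivAt (fun y' => u x y') (pdy u x y) y := by
  have h := sliceY hu x y
  have he : pdy u x y = fderiv ℝ (fun p : ℝ × ℝ => u p.1 p.2) (x, y) (0, 1) := h.deriv
  rw [he]; exact h

lemma hasDerivAt_pdx (hu : Differentiable ℝ fun p : ℝ × ℝ => u p.1 p.2) (x y : ℝ) :
    HasDerivAt (fun x' => u x' y) (pdx u x y) x := by
  have h := sliceX hu x y
  have he : pdx u x y = fderiv ℝ (fun p : ℝ × ℝ => u p.1 p.2) (x, y) (1, 0) := h.deriv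
  rw [he]; exact h

lemma contDiff_pdy (hu : ContDiff ℝ 2 fun p : ℝ × ℝ => u p.1 p.2) :
    ContDiff ℝ 1 fun p : ℝ × ℝ => pdy u p.1 p.2 := by
  have h := (hu.fderiv_right (m := 1) (by norm_num)).clm_apply contDiff_const
    (g := fun _ => ((0 : ℝ), (1 : ℝ)))
  have heq : (fun p : ℝ × ℝ => pdy u p.1 p.2)
      = fun p => fderiv ℝ (fun p : ℝ × ℝ => u p.1 p.2) p ((0 : ℝ), (1 : ℝ)) :=
    funext fun p => (sliceY (hu.differentiable two_ne_zero) p.1 p.2).deriv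
  rw [heq]; exact h

lemma contDiff_pdx (hu : ContDiff ℝ 2 fun p : ℝ × ℝ => u p.1 p.2) :
    ContDiff ℝ 1 fun p : ℝ × ℝ => pdx u p.1 p.2 := by
  have h := (hu.fderiv_right (m := 1) (by norm_num)).clm_apply contDiff_const
    (g := fun _ => ((1 : ℝ), (0 : ℝ)))
  have heq : (fun p : ℝ × ℝ => pdx u p.1 p.2)
      = fun p => fderiv ℝ (fun p : ℝ × ℝ => u p.1 p.2) p ((1 : ℝ), (0 : ℝ)) :=
    funext fun p => (sliceX (hu.differentiable two_ne_zero) p.1 p.2).deriv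
  rw [heq]; exact h

lemma pdy2_eq_deriv_pdy (x y : ℝ) :
    pdy2 u x y = deriv (fun y' => pdy u x y') y := by
  rw [pdy2, show (2 : ℕ) = 1 + 1 from rfl, iteratedDeriv_succ, iteratedDeriv_one]
  rfl

lemma hasDerivAt_pdy2 (hu : ContDiff ℝ 2 fun p : ℝ × ℝ => u p.1 p.2) (x y : ℝ) :
    HasDerivAt (fun y' => pdy u x y') (pdy2 u x y) y := by
  have h := sliceY ((contDiff_pdy hu).differentiable one_ne_zero) x y
  have he : pdy2 u x y
      = fderiv ℝ (fun p : ℝ × ℝ => pdy u p.1 p.2) (x, y) (0, 1) := by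
    rw [pdy2_eq_deriv_pdy]; exact h.deriv
  rw [he]; exact h

lemma continuous_pdy2 (hu : ContDiff ℝ 2 fun p : ℝ × ℝ => u p.1 p.2) :
    Continuous fun p : ℝ × ℝ => pdy2 u p.1 p.2 := by
  have h := (((contDiff_pdy hu).fderiv_right (m := 0) (by norm_num)).clm_apply contDiff_const
    (g := fun _ => ((0 : ℝ), (1 : ℝ)))).continuous
  have heq : (fun p : ℝ × ℝ => pdy2 u p.1 p.2)
      = fun p => fderiv ℝ (fun p : ℝ × ℝ => pdy u p.1 p.2) p ((0 : ℝ), (1 : ℝ)) :=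
    funext fun p => by
      rw [pdy2_eq_deriv_pdy]
      exact (sliceY ((contDiff_pdy hu).differentiable one_ne_zero) p.1 p.2).deriv
  rw [heq]; exact h

lemma continuous_pxInv {L : ℝ} {w : ℝ → ℝ → ℝ}
    (hw : Continuous fun p : ℝ × ℝ => w p.1 p.2) :
    Continuous fun p : ℝ × ℝ => pxInv L w p.1 p.2 := by
  have h := intervalIntegral.continuous_parametric_intervalIntegral_of_continuous
    (μ := volume) (f := fun (p : ℝ × ℝ) (t : ℝ) => w t p.2) (a₀ := L)
    (s := fun p : ℝ × ℝ => p.1)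
    (by exact hw.comp (continuous_snd.prodMk (continuous_snd.comp continuous_fst)))
    continuous_fst
  have heq : (fun p : ℝ × ℝ => pxInv L w p.1 p.2)
      = fun p : ℝ × ℝ => ∫ t in L..p.1, w t p.2 := funext fun p => by
    rw [pxInv, intervalIntegral.integral_symm p.1 L]
  rw [heq]; exact h

lemma hasDerivAt_pxInv_x {L : ℝ} {w : ℝ → ℝ → ℝ}
    (hw : Continuous fun p : ℝ × ℝ => w p.1 p.2) (x y : ℝ) :
    HasDerivAt (fun x' => pxInv L w x' y) (w x y) x := by
  have hc : Continuous fun t => w t y := hw.comp (continuous_id.prodMk continuous_const)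
  have h := (hc.integral_hasStrictDerivAt L x).hasDerivAt
  have heq : (fun x' => pxInv L w x' y) = fun x' => ∫ t in L..x', w t y := funext fun x' => by
    rw [pxInv, intervalIntegral.integral_symm x' L]
  rw [heq]; exact h

/-- Morawetz multiplier identity for the nonlocal term under the closed-loop boundary
conditions in `y`:
`∫_Ω x u (∂ₓ⁻¹ u_yy) dx dy = β ∫₀^L x u(x,L)² dx + ½ ∫_Ω ((∂ₓ⁻¹ u_y))² dx dy`. -/
theorem kp_morawetz_nonlocal (L β : ℝ) (hL : 0 < L) (hβ : 0 < β)
    (u : ℝ → ℝ → ℝ) (hu : ContDiff ℝ 2 (fun p : ℝ × ℝ => u p.1 p.2))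
    (hbx : ∀ y ∈ Set.Icc (0:ℝ) L, u L y = 0)
    (hby : ∀ x ∈ Set.Icc (0:ℝ) L, pdy u x 0 = 0 ∧ pdy u x L = β * pdx u x L) :
    (∫ x in (0:ℝ)..L, ∫ y in (0:ℝ)..L, x * u x y * pxInv L (pdy2 u) x y)
      = β * (∫ x in (0:ℝ)..L, x * (u x L)^2)
        + (1/2) * (∫ x in (0:ℝ)..L, ∫ y in (0:ℝ)..L, (pxInv L (pdy u) x y)^2) := by
  have hud : Differentiable ℝ fun p : ℝ × ℝ => u p.1 p.2 := hu.differentiable two_ne_zero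
  have hcu : Continuous fun p : ℝ × ℝ => u p.1 p.2 := hu.continuous
  have hcy : Continuous fun p : ℝ × ℝ => pdy u p.1 p.2 := (contDiff_pdy hu).continuous
  have hcx : Continuous fun p : ℝ × ℝ => pdx u p.1 p.2 := (contDiff_pdx hu).continuous
  have hcy2 : Continuous fun p : ℝ × ℝ => pdy2 u p.1 p.2 := continuous_pdy2 hu
  have hcB : Continuous fun p : ℝ × ℝ => pxInv L (pdy u) p.1 p.2 := continuous_pxInv hcy
  have hcA : Continuous fun p : ℝ × ℝ => pxInv L (pdy2 u) p.1 p.2 := continuous_pxInv hcy2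
  have hcu_y : ∀ x, Continuous fun y => u x y := fun x => by
    have h := contSliceY hcu x; exact h
  have hcB_y : ∀ x, Continuous fun y => pxInv L (pdy u) x y := fun x => by
    have h := contSliceY hcB x; exact h
  have hcA_y : ∀ x, Continuous fun y => pxInv L (pdy2 u) x y := fun x => by
    have h := contSliceY hcA x; exact h
  have hcpdy_y : ∀ x, Continuous fun y => pdy u x y := fun x => by
    have h := contSliceY hcy x; exact h
  have hcB_x : ∀ y, Continuous fun x => pxInv L (pdy u) x y := fun y => by
    have h := contSliceX hcB y; exact h
  have hcpdy_x : ∀ y, Continuous fun x => pdy u x y := fun y => by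
    have h := contSliceX hcy y; exact h
  have hcpdx_x : Continuous fun s => pdx u s L := by
    have h := contSliceX hcx L; exact h
  have hcpdy2_y : ∀ s, Continuous fun t => pdy2 u s t := fun s => by
    have h := contSliceY hcy2 s; exact h
  have hcuL : Continuous fun x => u x L := by
    have h := contSliceX hcu L; exact h
  -- boundary values of B = pxInv L (pdy u)
  have hB0 : ∀ x ∈ Set.Icc (0:ℝ) L, pxInv L (pdy u) x 0 = 0 := by
    intro x hx
    have h : (∫ s in x..L, pdy u s 0) = ∫ s in x..L, (0:ℝ) := by
      apply intervalIntegral.integral_congr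
      intro s hs
      rw [Set.uIcc_of_le hx.2] at hs
      exact (hby s ⟨le_trans hx.1 hs.1, hs.2⟩).1
    simp [pxInv, h]
  have hBL : ∀ x ∈ Set.Icc (0:ℝ) L, pxInv L (pdy u) x L = β * u x L := by
    intro x hx
    have h : (∫ s in x..L, pdy u s L) = ∫ s in x..L, β * pdx u s L := by
      apply intervalIntegral.integral_congr
      intro s hs
      rw [Set.uIcc_of_le hx.2] at hs
      exact (hby s ⟨le_trans hx.1 hs.1, hs.2⟩).2
    have h2 : (∫ s in x..L, pdx u s L) = u L L - u x L :=
      intervalIntegral.integral_eq_sub_of_hasDerivAt (fun s _ => hasDerivAt_pdx hud s L)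
        (hcpdx_x.intervalIntegrable x L)
    rw [pxInv, h, intervalIntegral.integral_const_mul, h2,
      hbx L (Set.right_mem_Icc.mpr hL.le)]
    ring
  -- derivative of B in x
  have hBx : ∀ x y, HasDerivAt (fun x' => pxInv L (pdy u) x' y) (pdy u x y) x :=
    fun x y => hasDerivAt_pxInv_x hcy x y
  -- representation and derivative of B in y
  have hBrep : ∀ x y, pxInv L (pdy u) x y
      = pxInv L (pdy u) x 0 + ∫ t in (0:ℝ)..y, pxInv L (pdy2 u) x t := by
    intro x y
    have h1 : ∀ s ∈ Set.uIcc x L, pdy u s y - pdy u s 0 = ∫ t in (0:ℝ)..y, pdy2 u s t :=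
      fun s _ => (intervalIntegral.integral_eq_sub_of_hasDerivAt
        (fun t _ => hasDerivAt_pdy2 hu s t)
        ((hcpdy2_y s).intervalIntegrable 0 y)).symm
    have h2 : (∫ s in x..L, pdy u s y) - (∫ s in x..L, pdy u s 0)
        = ∫ s in x..L, (pdy u s y - pdy u s 0) :=
      (intervalIntegral.integral_sub
        ((hcpdy_x y).intervalIntegrable x L)
        ((hcpdy_x 0).intervalIntegrable x L)).symm
    have h3 : (∫ s in x..L, (pdy u s y - pdy u s 0))
        = ∫ s in x..L, ∫ t in (0:ℝ)..y, pdy2 u s t :=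
      intervalIntegral.integral_congr fun s hs => h1 s hs
    have h4 : (∫ s in x..L, ∫ t in (0:ℝ)..y, pdy2 u s t)
        = ∫ t in (0:ℝ)..y, ∫ s in x..L, pdy2 u s t := fubini_cont hcy2 x L 0 y
    have h5 : (∫ t in (0:ℝ)..y, ∫ s in x..L, pdy2 u s t)
        = -∫ t in (0:ℝ)..y, pxInv L (pdy2 u) x t := by
      rw [← intervalIntegral.integral_neg]
      apply intervalIntegral.integral_congr
      intro t _
      simp [pxInv]
    have hh := h2.trans (h3.trans (h4.trans h5))
    rw [pxInv, pxInv]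
    linarith [hh]
  have hBy : ∀ x y, HasDerivAt (fun y' => pxInv L (pdy u) x y') (pxInv L (pdy2 u) x y) y := by
    intro x y
    have hc : Continuous fun t => pxInv L (pdy2 u) x t := hcA_y x
    have h := HasDerivAt.const_add (pxInv L (pdy u) x 0)
      (hc.integral_hasStrictDerivAt 0 y).hasDerivAt
    have heq : (fun y' => pxInv L (pdy u) x y')
        = fun y' => pxInv L (pdy u) x 0 + ∫ t in (0:ℝ)..y', pxInv L (pdy2 u) x t :=
      funext fun y' => hBrep x y'
    rw [heq]; exact h
  -- integration by parts in y
  have hinner : ∀ x ∈ Set.Icc (0:ℝ) L,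
      (∫ y in (0:ℝ)..L, u x y * pxInv L (pdy2 u) x y)
        = β * (u x L)^2 - ∫ y in (0:ℝ)..L, pdy u x y * pxInv L (pdy u) x y := by
    intro x hx
    have h := intervalIntegral.integral_mul_deriv_eq_deriv_mul_of_hasDerivAt
      (u := fun y => u x y) (v := fun y => pxInv L (pdy u) x y)
      (u' := fun y => pdy u x y) (v' := fun y => pxInv L (pdy2 u) x y)
      (hcu_y x).continuousOn (hcB_y x).continuousOn
      (fun y _ => hasDerivAt_pdy hud x y) (fun y _ => hBy x y)
      ((hcpdy_y x).intervalIntegrable 0 L) ((hcA_y x).intervalIntegrable 0 L)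
    beta_reduce at h
    rw [h, hBL x hx, hB0 x hx]
    ring
  -- rewrite the outer integrand
  have houter : ∀ x ∈ Set.uIcc (0:ℝ) L,
      (∫ y in (0:ℝ)..L, x * u x y * pxInv L (pdy2 u) x y)
        = x * (β * (u x L)^2)
          - x * ∫ y in (0:ℝ)..L, pdy u x y * pxInv L (pdy u) x y := by
    intro x hx
    rw [Set.uIcc_of_le hL.le] at hx
    have h1 : (∫ y in (0:ℝ)..L, x * u x y * pxInv L (pdy2 u) x y)
        = x * ∫ y in (0:ℝ)..L, u x y * pxInv L (pdy2 u) x y := by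
      rw [← intervalIntegral.integral_const_mul]
      apply intervalIntegral.integral_congr
      intro y _
      ring
    rw [h1, hinner x hx]
    ring
  rw [intervalIntegral.integral_congr houter]
  have hc1 : Continuous fun x => x * (β * (u x L)^2) := by
    exact continuous_id.mul (continuous_const.mul (hcuL.pow 2))
  have hcG : Continuous fun x => ∫ y in (0:ℝ)..L, pdy u x y * pxInv L (pdy u) x y :=
    intervalIntegral.continuous_parametric_intervalIntegral_of_continuous' (μ := volume)
      (f := fun x y => pdy u x y * pxInv L (pdy u) x y) (hcy.mul hcB) 0 L
  have hc2 : IntervalIntegrable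
      (fun x => x * ∫ y in (0:ℝ)..L, pdy u x y * pxInv L (pdy u) x y) volume 0 L :=
    (continuous_id.mul hcG).intervalIntegrable 0 L
  rw [intervalIntegral.integral_sub (hc1.intervalIntegrable 0 L) hc2]
  have hsimp : (∫ x in (0:ℝ)..L, x * (β * (u x L)^2))
      = β * ∫ x in (0:ℝ)..L, x * (u x L)^2 := by
    rw [← intervalIntegral.integral_const_mul]
    apply intervalIntegral.integral_congr
    intro x _
    ring
  rw [hsimp]
  -- the double integral term
  have hxIBP : ∀ y, (∫ x in (0:ℝ)..L, x * pdy u x y * pxInv L (pdy u) x y)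
      = -(1/2) * ∫ x in (0:ℝ)..L, (pxInv L (pdy u) x y)^2 := by
    intro y
    have hder : ∀ x, HasDerivAt (fun x' => x' * pxInv L (pdy u) x' y)
        (pxInv L (pdy u) x y + x * pdy u x y) x := fun x => by
      have h := (hasDerivAt_id' x).mul (hBx x y)
      exact h.congr_deriv (by ring)
    have h := intervalIntegral.integral_mul_deriv_eq_deriv_mul_of_hasDerivAt
      (u := fun x => x * pxInv L (pdy u) x y) (v := fun x => pxInv L (pdy u) x y)
      (u' := fun x => pxInv L (pdy u) x y + x * pdy u x y) (v' := fun x => pdy u x y)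
      (continuous_id.mul (hcB_x y)).continuousOn (hcB_x y).continuousOn
      (fun x _ => hder x) (fun x _ => hBx x y)
      (((hcB_x y).add (continuous_id.mul (hcpdy_x y))).intervalIntegrable 0 L)
      ((hcpdy_x y).intervalIntegrable 0 L)
    beta_reduce at h
    have hL0 : pxInv L (pdy u) L y = 0 := by simp [pxInv]
    have e1 : (∫ x in (0:ℝ)..L, (x * pxInv L (pdy u) x y) * pdy u x y)
        = ∫ x in (0:ℝ)..L, x * pdy u x y * pxInv L (pdy u) x y :=
      intervalIntegral.integral_congr fun x _ => by ring
    have e2 : (∫ x in (0:ℝ)..L, (pxInv L (pdy u) x y + x * pdy u x y) * pxInv L (pdy u) x y)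
        = (∫ x in (0:ℝ)..L, (pxInv L (pdy u) x y)^2)
          + ∫ x in (0:ℝ)..L, x * pdy u x y * pxInv L (pdy u) x y := by
      have i1 : IntervalIntegrable (fun x => (pxInv L (pdy u) x y)^2) volume 0 L :=
        ((hcB_x y).pow 2).intervalIntegrable 0 L
      have i2 : IntervalIntegrable (fun x => x * pdy u x y * pxInv L (pdy u) x y) volume 0 L :=
        ((continuous_id.mul (hcpdy_x y)).mul (hcB_x y)).intervalIntegrable 0 L
      rw [← intervalIntegral.integral_add i1 i2]
      apply intervalIntegral.integral_congr
      intro x _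
      ring
    rw [e1, e2, hL0] at h
    ring_nf at h ⊢
    linarith [h]
  have hJ : (∫ x in (0:ℝ)..L, x * ∫ y in (0:ℝ)..L, pdy u x y * pxInv L (pdy u) x y)
      = -(1/2) * ∫ x in (0:ℝ)..L, ∫ y in (0:ℝ)..L, (pxInv L (pdy u) x y)^2 := by
    have hfub : Continuous fun p : ℝ × ℝ => p.1 * pdy u p.1 p.2 * pxInv L (pdy u) p.1 p.2 :=
      (continuous_fst.mul hcy).mul hcB
    calc (∫ x in (0:ℝ)..L, x * ∫ y in (0:ℝ)..L, pdy u x y * pxInv L (pdy u) x y)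
        = ∫ x in (0:ℝ)..L, ∫ y in (0:ℝ)..L, x * pdy u x y * pxInv L (pdy u) x y := by
          apply intervalIntegral.integral_congr
          intro x _
          beta_reduce
          rw [← intervalIntegral.integral_const_mul]
          apply intervalIntegral.integral_congr
          intro y _
          ring
      _ = ∫ y in (0:ℝ)..L, ∫ x in (0:ℝ)..L, x * pdy u x y * pxInv L (pdy u) x y :=
          fubini_cont hfub 0 L 0 L
      _ = ∫ y in (0:ℝ)..L, -(1/2) * ∫ x in (0:ℝ)..L, (pxInv L (pdy u) x y)^2 :=
          intervalIntegral.integral_congr fun y _ => hxIBP y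
      _ = -(1/2) * ∫ y in (0:ℝ)..L, ∫ x in (0:ℝ)..L, (pxInv L (pdy u) x y)^2 :=
          intervalIntegral.integral_const_mul _ _
      _ = -(1/2) * ∫ x in (0:ℝ)..L, ∫ y in (0:ℝ)..L, (pxInv L (pdy u) x y)^2 := by
          rw [fubini_cont (f := fun x y => (pxInv L (pdy u) x y)^2) (hcB.pow 2) 0 L 0 L]
  rw [hJ]
  ring

end
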